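/- Let A* ∈ ℝ^{n×n}, B ∈ ℝ^{n×m}, let W ∈ ℝ^{n×n} be symmetric positive semidefinite, let Q₀ ∈ ℝ^{n×n} be symmetric, let R ∈ ℝ^{m×m} be symmetric positive semidefinite, and let L ∈ ℝ^{m×n}. Define the feasible set F = {(Y, X) ∈ ℝ^{m×n} × ℝ^{n×n} : X symmetric positive definite and (A*X + BY)X⁻¹(A*X + BY)ᵀ − X + W ⪯ 0}, and the cost f(Y, X) = trace(Q₀X) + trace(R·Y X⁻¹ Yᵀ) + 2·trace(LᵀY). Suppose X* ∈ ℝ^{n×n} is symmetric positive definite, (0, X*) ∈ F, and f(Y, X) ≥ f(0, X*) = trace(Q₀X*) for all (Y, X) ∈ F (i.e., (0, X*) minimizes f over F). Then for every (Y, X) ∈ F, f(Y, X) − trace(Q₀X*) ≥ trace(R·Y X⁻¹ Yᵀ). -/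

import Mathlib

open Matrix

noncomputable section

/-- Feasibility for the convex reformulation of the discrete-time LQR:
`X` is symmetric positive definite and
`(A*X + BY)X⁻¹(A*X + BY)ᵀ − X + W ⪯ 0`. -/
def Feasible {n m : ℕ} (Astar : Matrix (Fin n) (Fin n) ℝ) (B : Matrix (Fin n) (Fin m) ℝ)
    (W : Matrix (Fin n) (Fin n) ℝ) (Y : Matrix (Fin m) (Fin n) ℝ)
    (X : Matrix (Fin n) (Fin n) ℝ) : Prop :=
  X.PosDef ∧
    (-((Astar * X + B * Y) * X⁻¹ * (Astar * X + B * Y)ᵀ - X + W)).PosSemidef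

/-- Cost of the convex reformulation:
`f(Y, X) = trace(Q₀X) + trace(R·Y X⁻¹ Yᵀ) + 2·trace(LᵀY)`. -/
def cost {n m : ℕ} (Q0 : Matrix (Fin n) (Fin n) ℝ) (R : Matrix (Fin m) (Fin m) ℝ)
    (L : Matrix (Fin m) (Fin n) ℝ) (Y : Matrix (Fin m) (Fin n) ℝ)
    (X : Matrix (Fin n) (Fin n) ℝ) : ℝ :=
  Matrix.trace (Q0 * X) + Matrix.trace (R * (Y * X⁻¹ * Yᵀ)) +
    2 * Matrix.trace (Lᵀ * Y)

namespace LQRHelpers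

set_option linter.unusedSectionVars false

variable {ι : Type*} [Fintype ι] [DecidableEq ι]

lemma psd_add {A B : Matrix ι ι ℝ} (hA : A.PosSemidef) (hB : B.PosSemidef) :
    (A + B).PosSemidef :=
  ⟨hA.1.add hB.1, fun x => by
    simpa [mul_add, add_mul] using add_nonneg (hA.2 x) (hB.2 x)⟩

lemma psd_smul {A : Matrix ι ι ℝ} {t : ℝ} (ht : 0 ≤ t) (hA : A.PosSemidef) :
    (t • A).PosSemidef := by
  refine ⟨?_, fun x => ?_⟩
  · show (t • A)ᴴ = t • A
    rw [conjTranspose_smul, hA.1.eq, star_trivial]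
  · exact (hA.smul ht).2 x

lemma pd_add_psd {A B : Matrix ι ι ℝ} (hA : A.PosDef) (hB : B.PosSemidef) :
    (A + B).PosDef :=
  ⟨hA.1.add hB.1, fun x hx => by
    simpa [mul_add, add_mul] using add_pos_of_pos_of_nonneg (hA.2 (x := x) hx) (hB.2 x)⟩

lemma pd_smul {A : Matrix ι ι ℝ} {t : ℝ} (ht : 0 < t) (hA : A.PosDef) :
    (t • A).PosDef := by
  refine ⟨?_, fun x hx => ?_⟩
  · show (t • A)ᴴ = t • A
    rw [conjTranspose_smul, hA.1.eq, star_trivial]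
  · exact (hA.smul ht).2 hx

lemma schur_forward {X M : Matrix ι ι ℝ} (hX : X.PosDef) :
    (fromBlocks X Mᵀ M (M * X⁻¹ * Mᵀ)).PosSemidef := by
  haveI := X.invertibleOfIsUnitDet hX.det_pos.ne'.isUnit
  have h := (Matrix.PosDef.fromBlocks₁₁ (Mᵀ) (M * X⁻¹ * Mᵀ) hX).mpr
  simp only [conjTranspose_eq_transpose_of_trivial, transpose_transpose] at h
  exact h (by rw [sub_self]; exact Matrix.PosSemidef.zero)

lemma schur_backward {X M S : Matrix ι ι ℝ} (hX : X.PosDef)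
    (h : (fromBlocks X Mᵀ M S).PosSemidef) : (S - M * X⁻¹ * Mᵀ).PosSemidef := by
  haveI := X.invertibleOfIsUnitDet hX.det_pos.ne'.isUnit
  have h2 := (Matrix.PosDef.fromBlocks₁₁ (Mᵀ) S hX).mp
  simp only [conjTranspose_eq_transpose_of_trivial, transpose_transpose] at h2
  exact h2 h

lemma feas_convex {n m : ℕ} {Astar : Matrix (Fin n) (Fin n) ℝ} {B : Matrix (Fin n) (Fin m) ℝ}
    {W : Matrix (Fin n) (Fin n) ℝ} {Y : Matrix (Fin m) (Fin n) ℝ}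
    {X Xs : Matrix (Fin n) (Fin n) ℝ} (h1 : Feasible Astar B W Y X)
    (h2 : Feasible Astar B W 0 Xs) {t : ℝ} (ht0 : 0 ≤ t) (ht1 : t ≤ 1) :
    Feasible Astar B W (t • Y) (t • X + (1 - t) • Xs) := by
  obtain ⟨hX, hL1⟩ := h1
  obtain ⟨hXs, hL2⟩ := h2
  set M1 := Astar * X + B * Y with hM1
  set M2 := Astar * Xs with hM2
  have hL2' : (-(M2 * Xs⁻¹ * M2ᵀ - Xs + W)).PosSemidef := by
    simpa [hM2] using hL2
  have hXtpd : (t • X + (1 - t) • Xs).PosDef := by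
    rcases eq_or_lt_of_le ht0 with h | h
    · simpa [← h] using hXs
    · exact pd_add_psd (pd_smul h hX) (psd_smul (by linarith) hXs.posSemidef)
  have hMt : Astar * (t • X + (1 - t) • Xs) + B * (t • Y) = t • M1 + (1 - t) • M2 := by
    simp only [hM1, hM2, Matrix.mul_add, Matrix.mul_smul, smul_add]
    abel
  refine ⟨hXtpd, ?_⟩
  have hblock : (fromBlocks (t • X + (1 - t) • Xs) (t • M1 + (1 - t) • M2)ᵀ
      (t • M1 + (1 - t) • M2)
      (t • (M1 * X⁻¹ * M1ᵀ) + (1 - t) • (M2 * Xs⁻¹ * M2ᵀ))).PosSemidef := by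
    have hb1 := psd_smul ht0 (schur_forward (M := M1) hX)
    have hb2 := psd_smul (by linarith : (0:ℝ) ≤ 1 - t) (schur_forward (M := M2) hXs)
    have hsum := psd_add hb1 hb2
    simpa only [Matrix.fromBlocks_smul, Matrix.fromBlocks_add, transpose_add,
      transpose_smul] using hsum
  have hkey := schur_backward hXtpd hblock
  have hiden : -((Astar * (t • X + (1 - t) • Xs) + B * (t • Y)) * (t • X + (1 - t) • Xs)⁻¹ *
        (Astar * (t • X + (1 - t) • Xs) + B * (t • Y))ᵀ - (t • X + (1 - t) • Xs) + W)
      = t • (-(M1 * X⁻¹ * M1ᵀ - X + W)) + (1 - t) • (-(M2 * Xs⁻¹ * M2ᵀ - Xs + W))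
        + ((t • (M1 * X⁻¹ * M1ᵀ) + (1 - t) • (M2 * Xs⁻¹ * M2ᵀ)) -
            (t • M1 + (1 - t) • M2) * (t • X + (1 - t) • Xs)⁻¹ * (t • M1 + (1 - t) • M2)ᵀ) := by
    rw [hMt]
    module
  rw [hiden]
  exact psd_add (psd_add (psd_smul ht0 hL1) (psd_smul (by linarith) hL2')) hkey

end LQRHelpers

open LQRHelpers in
/-- Partial quadratic growth of the convex reformulation of the discrete-time LQR. -/
theorem stmt_16 {n m : ℕ}
    (Astar : Matrix (Fin n) (Fin n) ℝ) (B : Matrix (Fin n) (Fin m) ℝ)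
    (W Q0 : Matrix (Fin n) (Fin n) ℝ) (R : Matrix (Fin m) (Fin m) ℝ)
    (L : Matrix (Fin m) (Fin n) ℝ)
    (Xstar : Matrix (Fin n) (Fin n) ℝ)
    (hW : W.PosSemidef) (hQ0 : Q0.IsHermitian) (hR : R.PosSemidef)
    (hXs : Xstar.PosDef)
    (hfeas : Feasible Astar B W 0 Xstar)
    (hval : cost Q0 R L 0 Xstar = Matrix.trace (Q0 * Xstar))
    (hmin : ∀ Y : Matrix (Fin m) (Fin n) ℝ, ∀ X : Matrix (Fin n) (Fin n) ℝ,
      Feasible Astar B W Y X → cost Q0 R L 0 Xstar ≤ cost Q0 R L Y X) :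
    ∀ Y : Matrix (Fin m) (Fin n) ℝ, ∀ X : Matrix (Fin n) (Fin n) ℝ,
      Feasible Astar B W Y X →
      Matrix.trace (R * (Y * X⁻¹ * Yᵀ)) ≤
        cost Q0 R L Y X - Matrix.trace (Q0 * Xstar) := by
  intro Y X hYX
  set c : ℝ := Matrix.trace (Q0 * X) + 2 * Matrix.trace (Lᵀ * Y) - Matrix.trace (Q0 * Xstar)
    with hc
  have hgoal : cost Q0 R L Y X - Matrix.trace (Q0 * Xstar)
      = Matrix.trace (R * (Y * X⁻¹ * Yᵀ)) + c := by
    rw [hc]; unfold cost; ring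
  rw [hgoal]
  have hstep : ∀ t : ℝ, 0 < t → t ≤ 1 →
      0 ≤ c + t * Matrix.trace (R * (Y * (t • X + (1 - t) • Xstar)⁻¹ * Yᵀ)) := by
    intro t ht0 ht1
    have hfe := feas_convex hYX hfeas ht0.le ht1
    have h := hmin _ _ hfe
    rw [hval] at h
    unfold cost at h
    have e1 : Matrix.trace (Q0 * (t • X + (1 - t) • Xstar))
        = t * Matrix.trace (Q0 * X) + (1 - t) * Matrix.trace (Q0 * Xstar) := by
      rw [Matrix.mul_add, Matrix.trace_add, Matrix.mul_smul, Matrix.mul_smul,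
        Matrix.trace_smul, Matrix.trace_smul, smul_eq_mul, smul_eq_mul]
    have e2 : (t • Y) * (t • X + (1 - t) • Xstar)⁻¹ * (t • Y)ᵀ
        = (t * t) • (Y * (t • X + (1 - t) • Xstar)⁻¹ * Yᵀ) := by
      rw [transpose_smul, Matrix.smul_mul, Matrix.smul_mul, Matrix.mul_smul, smul_smul]
    have e3 : Lᵀ * (t • Y) = t • (Lᵀ * Y) := Matrix.mul_smul _ _ _
    rw [e1, e2, e3, Matrix.mul_smul, Matrix.trace_smul, Matrix.trace_smul,
      smul_eq_mul, smul_eq_mul] at h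
    rw [hc]
    nlinarith [h]
  have hXt : Continuous fun t : ℝ => t • X + (1 - t) • Xstar :=
    (continuous_id.smul continuous_const).add
      ((continuous_const.sub continuous_id).smul continuous_const)
  have hg : Continuous fun M : Matrix (Fin n) (Fin n) ℝ =>
      Matrix.trace (R * (Y * M * Yᵀ)) :=
    (continuous_const.matrix_mul
      ((continuous_const.matrix_mul continuous_id).matrix_mul continuous_const)).matrix_trace
  have hdet : ((0:ℝ) • X + ((1:ℝ) - 0) • Xstar).det ≠ 0 := by
    simpa using hXs.det_pos.ne'
  have hinv : ContinuousAt Inv.inv ((0:ℝ) • X + ((1:ℝ) - 0) • Xstar) :=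
    continuousAt_matrix_inv _ (by
      rw [Ring.inverse_eq_inv']
      exact continuousAt_inv₀ hdet)
  have h1 : Filter.Tendsto (fun t : ℝ => (t • X + (1 - t) • Xstar)⁻¹) (nhds 0)
      (nhds (((0:ℝ) • X + ((1:ℝ) - 0) • Xstar)⁻¹)) :=
    Filter.Tendsto.comp (g := (Inv.inv : Matrix (Fin n) (Fin n) ℝ → Matrix (Fin n) (Fin n) ℝ))
      (f := fun t : ℝ => t • X + (1 - t) • Xstar) hinv (hXt.tendsto 0)
  have h2 : Filter.Tendsto
      (fun t : ℝ => Matrix.trace (R * (Y * (t • X + (1 - t) • Xstar)⁻¹ * Yᵀ))) (nhds 0)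
      (nhds (Matrix.trace (R * (Y * ((0:ℝ) • X + ((1:ℝ) - 0) • Xstar)⁻¹ * Yᵀ)))) :=
    Filter.Tendsto.comp
      (g := fun M : Matrix (Fin n) (Fin n) ℝ => Matrix.trace (R * (Y * M * Yᵀ)))
      (f := fun t : ℝ => (t • X + (1 - t) • Xstar)⁻¹) (hg.tendsto _) h1
  have h3 : Filter.Tendsto
      (fun t : ℝ => c + t * Matrix.trace (R * (Y * (t • X + (1 - t) • Xstar)⁻¹ * Yᵀ)))
      (nhds 0) (nhds (c + (0:ℝ) * Matrix.trace (R * (Y * ((0:ℝ) • X + ((1:ℝ) - 0) • Xstar)⁻¹ * Yᵀ)))) :=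
    Filter.Tendsto.const_add c (Filter.Tendsto.mul (f := fun t : ℝ => t) Filter.tendsto_id h2)
  have hval0 : c + 0 * Matrix.trace (R * (Y * ((0:ℝ) • X + ((1:ℝ) - 0) • Xstar)⁻¹ * Yᵀ)) = c := by
    ring
  rw [hval0] at h3
  have hlim := h3.mono_left (nhdsWithin_le_nhds (s := Set.Ioi (0:ℝ)))
  have hcnn : (0:ℝ) ≤ c := by
    refine ge_of_tendsto hlim ?_
    filter_upwards [Ioc_mem_nhdsGT_of_mem (Set.mem_Ico.mpr ⟨le_refl (0:ℝ), zero_lt_one⟩)]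
      with t ht
    exact hstep t ht.1 ht.2
  linarith
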